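/- If a graph G has an induced cycle of length at least k and of the same parity as k (for k ≥ 3), then G has a pivot-minor isomorphic to C_k. -/

import Mathlib

open SimpleGraph

/-- The pivot toggle: pairs of vertices lying in different classes among
`N(u)∩N(v)`, `N(u)\N(v)\{v}`, `N(v)\N(u)\{u}`. -/
def pivotToggle {V : Type*} (G : SimpleGraph V) (u v a b : V) : Prop :=
  ((G.Adj u a ∧ G.Adj v a) ∧ (G.Adj u b ∧ ¬ G.Adj v b ∧ b ≠ v)) ∨
  ((G.Adj u a ∧ G.Adj v a) ∧ (G.Adj v b ∧ ¬ G.Adj u b ∧ b ≠ u)) ∨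
  ((G.Adj u a ∧ ¬ G.Adj v a ∧ a ≠ v) ∧ (G.Adj v b ∧ ¬ G.Adj u b ∧ b ≠ u)) ∨
  ((G.Adj u b ∧ G.Adj v b) ∧ (G.Adj u a ∧ ¬ G.Adj v a ∧ a ≠ v)) ∨
  ((G.Adj u b ∧ G.Adj v b) ∧ (G.Adj v a ∧ ¬ G.Adj u a ∧ a ≠ u)) ∨
  ((G.Adj u b ∧ ¬ G.Adj v b ∧ b ≠ v) ∧ (G.Adj v a ∧ ¬ G.Adj u a ∧ a ≠ u))

/-- The graph `G ∧ uv` obtained from `G` by pivoting the edge `uv`: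
complement the adjacency between the three classes pairwise and swap `u` and `v`. -/
def pivot {V : Type*} (G : SimpleGraph V) (u v : V) : SimpleGraph V :=
  letI := Classical.decEq V
  SimpleGraph.fromRel (fun x y =>
    (pivotToggle G u v (Equiv.swap u v x) (Equiv.swap u v y) ∧
      ¬ G.Adj (Equiv.swap u v x) (Equiv.swap u v y)) ∨
    (¬ pivotToggle G u v (Equiv.swap u v x) (Equiv.swap u v y) ∧
      G.Adj (Equiv.swap u v x) (Equiv.swap u v y)))

/-- One pivot step: `H` is obtained from `G` by pivoting an edge. -/
def PivotStep {V : Type*} (G H : SimpleGraph V) : Prop :=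
  ∃ u v, G.Adj u v ∧ H = pivot G u v

/-- `H` is (isomorphic to) a pivot-minor of `G`: `H` can be obtained from `G` by a
sequence of pivots and vertex deletions. -/
def IsPivotMinor {W V : Type*} (H : SimpleGraph W) (G : SimpleGraph V) : Prop :=
  ∃ G' : SimpleGraph V, Relation.ReflTransGen PivotStep G G' ∧
    ∃ S : Set V, Nonempty (H ≃g G'.induce S)


lemma pivotToggle_map {V W : Type*} {G : SimpleGraph V} {H : SimpleGraph W}
    (e : G ≃g H) (u v a b : V) :
    pivotToggle H (e u) (e v) (e a) (e b) ↔ pivotToggle G u v a b := by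
  simp [pivotToggle, e.map_adj_iff, ne_eq, EmbeddingLike.apply_eq_iff_eq]

def pivot_iso {V W : Type*} {G : SimpleGraph V} {H : SimpleGraph W}
    (e : G ≃g H) (u v : V) : pivot G u v ≃g pivot H (e u) (e v) := by
  classical
  refine ⟨e.toEquiv, ?_⟩
  intro a b
  show (pivot H (e u) (e v)).Adj (e a) (e b) ↔ (pivot G u v).Adj a b
  have hswap : ∀ x : V, Equiv.swap (e u) (e v) (e x) = e (Equiv.swap u v x) := by
    intro x
    exact (e.toEquiv.injective.swap_apply u v x)
  simp only [pivot, fromRel_adj, hswap, pivotToggle_map, e.map_adj_iff, ne_eq,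
    EmbeddingLike.apply_eq_iff_eq]
noncomputable def swapFn {V : Type*} (u v x : V) : V :=
  haveI := Classical.decEq V
  if x = u then v else if x = v then u else x

lemma swap_eq_swapFn {V : Type*} [DecidableEq V] (u v x : V) :
    Equiv.swap u v x = swapFn u v x := by
  by_cases h1 : x = u <;> by_cases h2 : x = v <;>
    simp [swapFn, Equiv.swap_apply_def, h1, h2] <;> (try split_ifs) <;> simp_all

lemma pivotToggle_symm {V : Type*} {G : SimpleGraph V} {u v a b : V} :
    pivotToggle G u v a b ↔ pivotToggle G u v b a := by
  have H : ∀ x y : V, pivotToggle G u v x y → pivotToggle G u v y x := by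
    intro x y h
    rcases h with h|h|h|h|h|h
    · exact Or.inr (Or.inr (Or.inr (Or.inl h)))
    · exact Or.inr (Or.inr (Or.inr (Or.inr (Or.inl h))))
    · exact Or.inr (Or.inr (Or.inr (Or.inr (Or.inr h))))
    · exact Or.inl h
    · exact Or.inr (Or.inl h)
    · exact Or.inr (Or.inr (Or.inl h))
  exact ⟨H a b, H b a⟩

lemma pivot_adj {V : Type*} (G : SimpleGraph V) (u v x y : V) :
    (pivot G u v).Adj x y ↔ x ≠ y ∧
      ((pivotToggle G u v (swapFn u v x) (swapFn u v y) ∧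
          ¬ G.Adj (swapFn u v x) (swapFn u v y)) ∨
       (¬ pivotToggle G u v (swapFn u v x) (swapFn u v y) ∧
          G.Adj (swapFn u v x) (swapFn u v y))) := by
  have t : pivotToggle G u v (swapFn u v y) (swapFn u v x) ↔
      pivotToggle G u v (swapFn u v x) (swapFn u v y) := pivotToggle_symm
  have a : G.Adj (swapFn u v y) (swapFn u v x) ↔ G.Adj (swapFn u v x) (swapFn u v y) :=
    G.adj_comm _ _
  simp only [pivot, fromRel_adj, swap_eq_swapFn]
  tauto

lemma swapFn_coe {V : Type*} {S : Set V} (u v x : S) :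
    swapFn (↑u : V) ↑v ↑x = ↑(swapFn u v x) := by
  by_cases h1 : x = u <;> by_cases h2 : x = v <;>
    simp_all [swapFn, Subtype.ext_iff]

lemma pivotToggle_induce {V : Type*} (G : SimpleGraph V) (S : Set V) (u v a b : S) :
    pivotToggle (G.induce S) u v a b ↔ pivotToggle G ↑u ↑v ↑a ↑b := by
  have h1 : (b ≠ v) ↔ ((b:V) ≠ ↑v) := Subtype.coe_injective.ne_iff.symm
  have h2 : (b ≠ u) ↔ ((b:V) ≠ ↑u) := Subtype.coe_injective.ne_iff.symm
  have h3 : (a ≠ v) ↔ ((a:V) ≠ ↑v) := Subtype.coe_injective.ne_iff.symm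
  have h4 : (a ≠ u) ↔ ((a:V) ≠ ↑u) := Subtype.coe_injective.ne_iff.symm
  simp only [pivotToggle, comap_adj, Function.Embedding.coe_subtype, h1, h2, h3, h4]

lemma induce_pivot {V : Type*} (G : SimpleGraph V) (S : Set V) (u v : S) :
    (pivot G ↑u ↑v).induce S = pivot (G.induce S) u v := by
  ext a b
  show (pivot G ↑u ↑v).Adj ↑a ↑b ↔ _
  rw [pivot_adj, pivot_adj]
  refine and_congr Subtype.coe_injective.ne_iff ?_
  rw [swapFn_coe, swapFn_coe, pivotToggle_induce]
  simp only [comap_adj, Function.Embedding.coe_subtype]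

lemma lift_steps {W : Type*} {K K' : SimpleGraph W} (h : Relation.ReflTransGen PivotStep K K') :
    ∀ {V : Type*} (G : SimpleGraph V) (S : Set V), (G.induce S ≃g K) →
      ∃ G', Relation.ReflTransGen PivotStep G G' ∧ Nonempty (G'.induce S ≃g K') := by
  induction h using Relation.ReflTransGen.head_induction_on with
  | refl => exact fun G S e => ⟨G, Relation.ReflTransGen.refl, ⟨e⟩⟩
  | head hstep _ ih =>
    rename_i K₀ K₁ _
    intro V G S e
    obtain ⟨u, v, huv, rfl⟩ := hstep
    set u' : S := e.symm u with hu'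
    set v' : S := e.symm v with hv'
    have heu : e u' = u := e.toEquiv.apply_symm_apply u
    have hev : e v' = v := e.toEquiv.apply_symm_apply v
    have hGadj : G.Adj ↑u' ↑v' := by
      have : (G.induce S).Adj u' v' := e.map_adj_iff.mp (by rw [heu, hev]; exact huv)
      exact this
    have e₁ : (pivot G ↑u' ↑v').induce S ≃g pivot K₀ u v := by
      rw [induce_pivot]
      have h2 := pivot_iso e u' v'
      rwa [heu, hev] at h2
    obtain ⟨G', hsteps, he'⟩ := ih (pivot G ↑u' ↑v') S e₁
    exact ⟨G', Relation.ReflTransGen.head ⟨↑u', ↑v', hGadj, rfl⟩ hsteps, he'⟩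
lemma swapFn_of_ne {V : Type*} {u v x : V} (h1 : x ≠ u) (h2 : x ≠ v) :
    swapFn u v x = x := by
  simp [swapFn, h1, h2]

lemma mod_two_cases (a N : ℕ) (h : a < 2 * N) (h2 : 0 < N) :
    a % N = if a < N then a else a - N := by
  split
  · exact Nat.mod_eq_of_lt ‹_›
  · rw [Nat.mod_eq_sub_mod (by omega), Nat.mod_eq_of_lt (by omega)]

lemma cg_adj_iff {N : ℕ} (hN : 2 ≤ N) (u v : Fin N) :
    (cycleGraph N).Adj u v ↔
      (u.val + 1 = v.val ∨ v.val + 1 = u.val ∨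
        (u.val = 0 ∧ v.val = N - 1) ∨ (v.val = 0 ∧ u.val = N - 1)) := by
  rw [cycleGraph_adj']
  have hu := u.isLt
  have hv := v.isLt
  rw [Fin.sub_def, Fin.sub_def]
  simp only []
  rw [mod_two_cases _ _ (by omega) (by omega), mod_two_cases _ _ (by omega) (by omega)]
  split <;> split <;> omega

lemma toggle_eval (n : ℕ) (a b : Fin (n + 5)) (ha : 2 ≤ a.val) (hb : 2 ≤ b.val) :
    pivotToggle (cycleGraph (n + 5)) ⟨0, by omega⟩ ⟨1, by omega⟩ a b ↔
      ((a.val = n + 4 ∧ b.val = 2) ∨ (a.val = 2 ∧ b.val = n + 4)) := by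
  have ha' := a.isLt
  have hb' := b.isLt
  unfold pivotToggle
  simp only [cg_adj_iff (show 2 ≤ n + 5 by omega), Fin.ext_iff, ne_eq]
  simp only [true_and, and_true, one_ne_zero, false_and, and_false, false_or, or_false,
    Nat.add_sub_cancel]
  omega

lemma cycle_step (n : ℕ) :
    ∃ (G₂ : SimpleGraph (Fin (n + 5))) (S : Set (Fin (n + 5))),
      PivotStep (cycleGraph (n + 5)) G₂ ∧ Nonempty (G₂.induce S ≃g cycleGraph (n + 3)) := by
  set u0 : Fin (n + 5) := ⟨0, by omega⟩
  set u1 : Fin (n + 5) := ⟨1, by omega⟩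
  set S : Set (Fin (n + 5)) := {x | 2 ≤ x.val} with hS
  refine ⟨pivot (cycleGraph (n + 5)) u0 u1, S, ⟨u0, u1, ?_, rfl⟩, ⟨?_⟩⟩
  · rw [cg_adj_iff (by omega)]
    simp [u0, u1]
  · refine SimpleGraph.Iso.symm ⟨⟨?_, ?_, ?_, ?_⟩, ?_⟩
    · exact fun i => ⟨⟨i.val + 2, by omega⟩, by simp [hS]⟩
    · exact fun x => ⟨x.1.val - 2, by have := x.1.isLt; omega⟩
    · intro i; apply Fin.ext; simp
    · intro x
      have hx : 2 ≤ x.1.val := x.2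
      apply Subtype.ext; apply Fin.ext; simp; omega
    · intro i j
      have hii := i.isLt
      have hjj := j.isLt
      set a : Fin (n + 5) := ⟨i.val + 2, by omega⟩ with ha
      set b : Fin (n + 5) := ⟨j.val + 2, by omega⟩ with hb
      show (pivot (cycleGraph (n + 5)) u0 u1).Adj a b ↔ (cycleGraph (n + 3)).Adj i j
      have hva : a.val = i.val + 2 := by rw [ha]
      have hvb : b.val = j.val + 2 := by rw [hb]
      have hsa : swapFn u0 u1 a = a :=
        swapFn_of_ne (fun h => by have h' := congrArg Fin.val h; have h0 : u0.val = 0 := rfl; omega)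
          (fun h => by have h' := congrArg Fin.val h; have h0 : u1.val = 1 := rfl; omega)
      have hsb : swapFn u0 u1 b = b :=
        swapFn_of_ne (fun h => by have h' := congrArg Fin.val h; have h0 : u0.val = 0 := rfl; omega)
          (fun h => by have h' := congrArg Fin.val h; have h0 : u1.val = 1 := rfl; omega)
      rw [pivot_adj, hsa, hsb, toggle_eval n a b (by omega) (by omega),
        cg_adj_iff (N := n + 5) (by omega), cg_adj_iff (N := n + 3) (by omega)]
      simp only [ne_eq, Fin.ext_iff, true_and, and_true, one_ne_zero, false_and, and_false,
        false_or, or_false, Nat.add_sub_cancel, hva, hvb]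
      omega

lemma IsPivotMinor.of_step {X V : Type*} {C : SimpleGraph X} {G H : SimpleGraph V}
    (hs : PivotStep G H) (h : IsPivotMinor C H) : IsPivotMinor C G := by
  obtain ⟨H', st, S, e⟩ := h
  exact ⟨H', Relation.ReflTransGen.head hs st, S, e⟩
def isoInduce {α W : Type*} {A : SimpleGraph α} {K : SimpleGraph W} (e : A ≃g K) (T : Set W) :
    A.induce (⇑e ⁻¹' T) ≃g K.induce T where
  toEquiv := e.toEquiv.subtypeEquiv (fun a => Iff.rfl)
  map_rel_iff' := by
    intro x y
    simp only [Equiv.subtypeEquiv, Equiv.coe_fn_mk, comap_adj, Function.Embedding.coe_subtype]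
    exact e.map_adj_iff

noncomputable def induceInduceIso {V : Type*} (G : SimpleGraph V) (S : Set V) (T : Set S) :
    (G.induce S).induce T ≃g G.induce (Subtype.val '' T) where
  toEquiv := Equiv.Set.image Subtype.val T Subtype.val_injective
  map_rel_iff' := by
    intro x y
    simp only [comap_adj, Function.Embedding.coe_subtype, Equiv.Set.image_apply]

lemma isPivotMinor_trans_induce {X W V : Type*} {C : SimpleGraph X} {K : SimpleGraph W}
    {G : SimpleGraph V} (S : Set V) (e : G.induce S ≃g K) (h : IsPivotMinor C K) :
    IsPivotMinor C G := by
  obtain ⟨K', hst, T, ⟨f⟩⟩ := h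
  obtain ⟨G', hst', ⟨e'⟩⟩ := lift_steps hst G S e
  refine ⟨G', hst', Subtype.val '' ((⇑e') ⁻¹' T), ⟨?_⟩⟩
  exact (f.trans (isoInduce e' T).symm).trans (induceInduceIso G' S _)

lemma cycle_minor (k j : ℕ) (hk : 3 ≤ k) :
    IsPivotMinor (cycleGraph k) (cycleGraph (k + 2 * j)) := by
  induction j with
  | zero =>
    refine ⟨cycleGraph (k + 2 * 0), Relation.ReflTransGen.refl, Set.univ, ⟨?_⟩⟩
    have h : k + 2 * 0 = k := by omega
    rw [h]
    exact (induceUnivIso _).symm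
  | succ j ih =>
    have h1 : k + 2 * (j + 1) = (k + 2 * j - 3) + 5 := by omega
    have h2 : k + 2 * j = (k + 2 * j - 3) + 3 := by omega
    rw [h2] at ih
    rw [h1]
    obtain ⟨G₂, S, hstep, ⟨e⟩⟩ := cycle_step (k + 2 * j - 3)
    exact IsPivotMinor.of_step hstep (isPivotMinor_trans_induce S e ih)

/-- If a graph `G` has an induced cycle of length `m ≥ k` with `m ≡ k (mod 2)`
(for `k ≥ 3`), then `G` has a pivot-minor isomorphic to `C_k`. -/
theorem stmt_11 {V : Type*} (G : SimpleGraph V) (k m : ℕ) (hk : 3 ≤ k)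
    (hkm : k ≤ m) (hpar : m % 2 = k % 2) (S : Set V)
    (hcycle : Nonempty (G.induce S ≃g cycleGraph m)) :
    IsPivotMinor (cycleGraph k) G := by
  obtain ⟨e⟩ := hcycle
  have hm : m = k + 2 * ((m - k) / 2) := by omega
  rw [hm] at e
  exact isPivotMinor_trans_induce S e (cycle_minor k _ hk)
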